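/- Let ζ ∈ ℂ be an n-th root of unity with ζ⁴ ≠ 1, and set g(z) = ζz + 1/(ζz). Then g(ℝ̂) is not a circle; equivalently, there is no linear fractional function λ ∈ ℂ(z) with λ ∘ g ∈ ℝ(z). -/

import Mathlib

open scoped Polynomial
open OnePoint

noncomputable section

/-- A rational function over `ℂ` has real coefficients (i.e. lies in `ℝ(z)`). -/
def RatFunc.IsReal (f : RatFunc ℂ) : Prop :=
  (∀ n, (f.num.coeff n).im = 0) ∧ (∀ n, (f.denom.coeff n).im = 0)

/-- A rational function is nonconstant. -/
def RatFunc.Nonconst (f : RatFunc ℂ) : Prop := ∀ c : ℂ, f ≠ RatFunc.C c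

/-- Composition `f ∘ g` of rational functions (substitution of `g` into `f`). -/
def RatFunc.comp' (f g : RatFunc ℂ) : RatFunc ℂ :=
  RatFunc.eval (algebraMap ℂ (RatFunc ℂ)) g f

/-- The map `Ĉ → Ĉ` induced by a rational function. -/
def sphereMap (f : RatFunc ℂ) : OnePoint ℂ → OnePoint ℂ :=
  fun p =>
    match p with
    | OnePoint.infty =>
        if f.denom.natDegree < f.num.natDegree then OnePoint.infty
        else ((f.num.coeff f.denom.natDegree / f.denom.coeff f.denom.natDegree : ℂ) : OnePoint ℂ)
    | (z : ℂ) =>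
        if f.denom.eval z = 0 then OnePoint.infty
        else ((f.num.eval z / f.denom.eval z : ℂ) : OnePoint ℂ)

/-- `ℝ̂ = ℝ ∪ {∞}` inside the Riemann sphere. -/
def realSphere : Set (OnePoint ℂ) :=
  insert OnePoint.infty (Set.range fun r : ℝ => ((r : ℂ) : OnePoint ℂ))

/-- A linear fractional (Möbius) rational function. -/
def IsMoebius (l : RatFunc ℂ) : Prop :=
  ∃ a b c d : ℂ, a * d - b * c ≠ 0 ∧
    l = (RatFunc.C a * RatFunc.X + RatFunc.C b) / (RatFunc.C c * RatFunc.X + RatFunc.C d)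

/-- A circle in the Riemann sphere: the image of `ℝ̂` under a Möbius function. -/
def IsCircle (S : Set (OnePoint ℂ)) : Prop :=
  ∃ l : RatFunc ℂ, IsMoebius l ∧ S = sphereMap l '' realSphere

/-! ### Auxiliary lemmas -/

lemma det_zero' (a b c d : ℂ) (h2 : b * (starRingEnd ℂ) d = (starRingEnd ℂ) b * d)
    (h3 : a * (starRingEnd ℂ) d = (starRingEnd ℂ) b * c) : a * d - b * c = 0 := by
  by_cases hd : d = 0
  · subst hd
    simp only [map_zero, mul_zero] at h3
    rcases mul_eq_zero.mp h3.symm with h | h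
    · simp [show b = 0 by simpa using congrArg (starRingEnd ℂ) h]
    · simp [h]
  · have hdc : (starRingEnd ℂ) d ≠ 0 := by simpa using hd
    have h0 : (starRingEnd ℂ) d * (a * d - b * c) = 0 := by
      have h1 : (starRingEnd ℂ) d * (a * d) = ((starRingEnd ℂ) b * c) * d := by
        rw [← h3]; ring
      rw [mul_sub, h1]
      linear_combination (-c) * h2
    rcases mul_eq_zero.mp h0 with h | h
    · exact absurd h hdc
    · exact h

lemma expand_im (u s v r ζ : ℂ) (t : ℝ) (ht : t ≠ 0) :
    ((u * (ζ * t + (starRingEnd ℂ) ζ / t) + s) *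
      (starRingEnd ℂ) (v * (ζ * t + (starRingEnd ℂ) ζ / t) + r)).im =
    (u * (starRingEnd ℂ) v).im * (Complex.normSq ζ * (t^2 + 1/t^2) + 2*(ζ*ζ).re)
      + ((u * (starRingEnd ℂ) r) * ζ + (s * (starRingEnd ℂ) v) * (starRingEnd ℂ) ζ).im * t
      + ((u * (starRingEnd ℂ) r) * (starRingEnd ℂ) ζ + (s * (starRingEnd ℂ) v) * ζ).im * (1/t)
      + (s * (starRingEnd ℂ) r).im := by
  simp only [map_add, map_mul, map_div₀, Complex.conj_conj, Complex.conj_ofReal]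
  simp only [Complex.mul_im, Complex.mul_re, Complex.add_im, Complex.add_re,
    Complex.div_im, Complex.div_re, Complex.conj_re, Complex.conj_im, Complex.normSq_apply,
    Complex.ofReal_re, Complex.ofReal_im]
  field_simp
  ring

lemma key (ζ : ℂ) (hzr : ζ.re ≠ 0) (hzi : ζ.im ≠ 0) (u s v r : ℂ)
    (h : ∀ t : ℝ, t ≠ 0 →
      ((u * (ζ * t + (starRingEnd ℂ) ζ / t) + s) *
        (starRingEnd ℂ) (v * (ζ * t + (starRingEnd ℂ) ζ / t) + r)).im = 0) :
    u * (starRingEnd ℂ) r = (starRingEnd ℂ) s * v ∧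
    s * (starRingEnd ℂ) r = (starRingEnd ℂ) s * r := by
  have e1 := (h 1 one_ne_zero).symm.trans (expand_im u s v r ζ 1 one_ne_zero)
  have e2 := (h (-1) (by norm_num)).symm.trans (expand_im u s v r ζ (-1) (by norm_num))
  have e3 := (h 2 two_ne_zero).symm.trans (expand_im u s v r ζ 2 two_ne_zero)
  have e4 := (h (-2) (by norm_num)).symm.trans (expand_im u s v r ζ (-2) (by norm_num))
  norm_num only at e1 e2 e3 e4
  set α := (u * (starRingEnd ℂ) v).im with hα
  set γ := (s * (starRingEnd ℂ) r).im with hγ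
  set μ₁ := u * (starRingEnd ℂ) r with hμ₁
  set μ₂ := s * (starRingEnd ℂ) v with hμ₂
  set A := (μ₁ * ζ + μ₂ * (starRingEnd ℂ) ζ).im with hA
  set B := (μ₁ * (starRingEnd ℂ) ζ + μ₂ * ζ).im with hB
  set K1 := Complex.normSq ζ with hK1
  set K2 := (ζ*ζ).re with hK2
  have hK1' : K1 ≠ 0 := fun hc => hzr (by
      have := Complex.normSq_eq_zero.mp hc; simp [this])
  have hαK : α * K1 = 0 := by linarith
  have hα0 : α = 0 := (mul_eq_zero.mp hαK).resolve_right hK1'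
  have hγ0 : γ = 0 := by
    rw [hα0] at e1 e2; linarith
  have hA0 : A = 0 := by rw [hα0, hγ0] at e1 e2 e3 e4; linarith
  have hB0 : B = 0 := by rw [hα0, hγ0] at e1 e2 e3 e4; linarith
  simp only [hA, hB, Complex.add_im, Complex.mul_im, Complex.conj_re, Complex.conj_im] at hA0 hB0
  have hsum : (μ₁.im + μ₂.im) * ζ.re = 0 := by linear_combination (hA0 + hB0) / 2
  have hdiff : (μ₁.re - μ₂.re) * ζ.im = 0 := by linear_combination (hA0 - hB0) / 2
  have him : μ₁.im = -μ₂.im := by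
    rcases mul_eq_zero.mp hsum with h' | h'
    · linarith
    · exact absurd h' hzr
  have hre : μ₁.re = μ₂.re := by
    rcases mul_eq_zero.mp hdiff with h' | h'
    · linarith
    · exact absurd h' hzi
  constructor
  · have h2 : (starRingEnd ℂ) s * v = (starRingEnd ℂ) μ₂ := by
      rw [hμ₂, map_mul, Complex.conj_conj, mul_comm]
    rw [h2]
    exact Complex.ext (by rw [Complex.conj_re]; exact hre) (by rw [Complex.conj_im]; exact him)
  · have hc : ((starRingEnd ℂ) (s * (starRingEnd ℂ) r)) = s * (starRingEnd ℂ) r :=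
      Complex.conj_eq_iff_im.mpr (by rw [← hγ]; exact hγ0)
    calc s * (starRingEnd ℂ) r = (starRingEnd ℂ) (s * (starRingEnd ℂ) r) := hc.symm
    _ = (starRingEnd ℂ) s * r := by simp

lemma star_rel (p q : ℂ[X]) (hq : q ≠ 0) :
    (algebraMap ℂ[X] (RatFunc ℂ) p / algebraMap ℂ[X] (RatFunc ℂ) q).num * q =
    p * (algebraMap ℂ[X] (RatFunc ℂ) p / algebraMap ℂ[X] (RatFunc ℂ) q).denom :=
  (RatFunc.num_mul_eq_mul_denom_iff hq).mpr rfl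

lemma eval_not_both_zero (f : RatFunc ℂ) (t : ℂ) (h1 : f.num.eval t = 0)
    (h2 : f.denom.eval t = 0) : False := by
  obtain ⟨u, v, huv⟩ := f.isCoprime_num_denom
  have := congrArg (Polynomial.eval t) huv
  simp [h1, h2] at this

lemma sphereMap_coe (f : RatFunc ℂ) (z : ℂ) :
    sphereMap f (z : OnePoint ℂ) =
      if f.denom.eval z = 0 then OnePoint.infty
      else ((f.num.eval z / f.denom.eval z : ℂ) : OnePoint ℂ) := rfl

lemma sphereMap_infty (f : RatFunc ℂ) :
    sphereMap f OnePoint.infty =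
      if f.denom.natDegree < f.num.natDegree then OnePoint.infty
      else ((f.num.coeff f.denom.natDegree / f.denom.coeff f.denom.natDegree : ℂ) : OnePoint ℂ) := rfl

lemma sphereMap_eval (f : RatFunc ℂ) (p q : ℂ[X])
    (hf : f = algebraMap ℂ[X] (RatFunc ℂ) p / algebraMap ℂ[X] (RatFunc ℂ) q)
    (hq : q ≠ 0) (t : ℂ) (ht : q.eval t ≠ 0) :
    sphereMap f (t : OnePoint ℂ) = ((p.eval t / q.eval t : ℂ) : OnePoint ℂ) := by
  have hstar := star_rel p q hq
  rw [← hf] at hstar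
  have hde : f.denom.eval t ≠ 0 := by
    intro h0
    have := congrArg (Polynomial.eval t) hstar
    simp only [Polynomial.eval_mul, h0, mul_zero] at this
    rcases mul_eq_zero.mp this.symm.symm with h | h
    · exact eval_not_both_zero f t
        (by rcases mul_eq_zero.mp this with h' | h'; exact h'; exact absurd h' ht) h0
    · exact ht h
  rw [sphereMap_coe, if_neg hde]
  congr 1
  have := congrArg (Polynomial.eval t) hstar
  simp only [Polynomial.eval_mul] at this
  field_simp
  linear_combination this

lemma linear_ne_zero' {c d : ℂ} (h : ¬(c = 0 ∧ d = 0)) :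
    (Polynomial.C c * Polynomial.X + Polynomial.C d : ℂ[X]) ≠ 0 := by
  intro h0
  apply h
  constructor
  · have := congrArg (fun p => Polynomial.coeff p 1) h0
    simpa using this
  · have := congrArg (fun p => Polynomial.coeff p 0) h0
    simpa using this

lemma circle_constraint (a b c d : ℂ) (hdet : a * d - b * c ≠ 0) (w : ℂ)
    (hw : (w : OnePoint ℂ) ∈
      sphereMap ((RatFunc.C a * RatFunc.X + RatFunc.C b) /
        (RatFunc.C c * RatFunc.X + RatFunc.C d)) '' realSphere) :
    ((d * w - b) * (starRingEnd ℂ) (a - c * w)).im = 0 := by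
  set l := (RatFunc.C a * RatFunc.X + RatFunc.C b) /
        (RatFunc.C c * RatFunc.X + RatFunc.C d) with hldef
  have hcd : ¬(c = 0 ∧ d = 0) := by
    rintro ⟨rfl, rfl⟩; simp at hdet
  have hq : (Polynomial.C c * Polynomial.X + Polynomial.C d : ℂ[X]) ≠ 0 := linear_ne_zero' hcd
  have hl : l = algebraMap ℂ[X] (RatFunc ℂ) (Polynomial.C a * Polynomial.X + Polynomial.C b) /
      algebraMap ℂ[X] (RatFunc ℂ) (Polynomial.C c * Polynomial.X + Polynomial.C d) := by
    simp only [hldef, map_add, map_mul, RatFunc.algebraMap_C, RatFunc.algebraMap_X]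
  have hstar : l.num * (Polynomial.C c * Polynomial.X + Polynomial.C d) =
      (Polynomial.C a * Polynomial.X + Polynomial.C b) * l.denom := by
    rw [hl]; exact star_rel _ _ hq
  obtain ⟨s, hs, hmap⟩ := hw
  rcases hs with hs | ⟨r, rfl⟩
  · -- s = ∞
    rw [hs, sphereMap_infty] at hmap
    by_cases hdeg : l.denom.natDegree < l.num.natDegree
    · rw [if_pos hdeg] at hmap
      exact absurd hmap (by simp)
    · rw [if_neg hdeg] at hmap
      set D := l.denom.natDegree with hD
      have hmonic : l.denom.coeff D = 1 := l.monic_denom.coeff_natDegree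
      rw [hmonic, div_one] at hmap
      have hw' : l.num.coeff D = w := by exact_mod_cast hmap
      have hstar' : l.num * (Polynomial.C c * Polynomial.X + Polynomial.C d) =
          Polynomial.C c * l.num * Polynomial.X + l.num * Polynomial.C d := by ring
      have hco := congrArg (fun p => Polynomial.coeff p (D + 1)) hstar
      simp only [hstar'] at hco
      have hrhs : (Polynomial.C a * Polynomial.X + Polynomial.C b) * l.denom =
          Polynomial.C a * (Polynomial.X * l.denom) + Polynomial.C b * l.denom := by ring
      rw [hrhs] at hco
      simp only [Polynomial.coeff_add, Polynomial.coeff_mul_X, Polynomial.coeff_mul_C,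
        Polynomial.coeff_C_mul, Polynomial.coeff_X_mul] at hco
      have hn1 : l.num.coeff (D + 1) = 0 :=
        Polynomial.coeff_eq_zero_of_natDegree_lt (lt_of_le_of_lt (not_lt.mp hdeg) (by omega))
      have hd1 : l.denom.coeff (D + 1) = 0 :=
        Polynomial.coeff_eq_zero_of_natDegree_lt (by omega)
      rw [hn1, hd1, hmonic, hw'] at hco
      have hacw : a - c * w = 0 := by linear_combination -hco
      rw [hacw]
      simp
  · -- s = coe r
    rw [sphereMap_coe] at hmap
    by_cases hde : l.denom.eval (r : ℂ) = 0
    · rw [if_pos hde] at hmap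
      exact absurd hmap (by simp)
    · rw [if_neg hde] at hmap
      have hmap' : l.num.eval (r:ℂ) / l.denom.eval (r:ℂ) = w := by
        exact_mod_cast hmap
      have hev := congrArg (Polynomial.eval (r : ℂ)) hstar
      simp only [Polynomial.eval_mul, Polynomial.eval_add, Polynomial.eval_C,
        Polynomial.eval_X] at hev
      by_cases hcr : c * (r:ℂ) + d = 0
      · rw [hcr, mul_zero] at hev
        have hab : a * (r:ℂ) + b = 0 := by
          rcases mul_eq_zero.mp hev.symm with h | h
          · exact h
          · exact absurd h hde
        exact absurd (by linear_combination a * hcr - c * hab) hdet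
      · have hwv : w = (a * (r:ℂ) + b) / (c * (r:ℂ) + d) := by
          rw [← hmap']
          rw [div_eq_div_iff hde hcr]
          linear_combination hev
        set e := c * (r:ℂ) + d with he
        have h1 : d * w - b = (r:ℂ) * ((a*d - b*c) / e) := by
          rw [hwv]; field_simp; ring
        have h2 : a - c * w = (a*d - b*c) / e := by
          rw [hwv]; field_simp; ring
        rw [h1, h2, mul_assoc, Complex.mul_conj]
        simp

lemma zeta_facts (n : ℕ) (hn : 0 < n) (ζ : ℂ) (hζ : ζ ^ n = 1) (h4 : ζ ^ 4 ≠ 1) :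
    ζ ≠ 0 ∧ ζ * (starRingEnd ℂ) ζ = 1 ∧ ζ⁻¹ = (starRingEnd ℂ) ζ ∧ ζ.re ≠ 0 ∧ ζ.im ≠ 0 := by
  have hz0 : ζ ≠ 0 := by
    intro h; rw [h, zero_pow hn.ne'] at hζ; exact zero_ne_one hζ
  have habs : ‖ζ‖ = 1 := by
    have h1 : ‖ζ‖ ^ n = 1 := by
      rw [← norm_pow, hζ, norm_one]
    rcases lt_trichotomy (‖ζ‖) 1 with h | h | h
    · exact absurd h1 (by nlinarith [pow_lt_one₀ (norm_nonneg ζ) h hn.ne'])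
    · exact h
    · exact absurd h1 (by nlinarith [one_lt_pow₀ h hn.ne'])
  have hns : Complex.normSq ζ = 1 := by
    have := Complex.sq_norm ζ
    rw [habs] at this; linarith [this]
  have hzz : ζ * (starRingEnd ℂ) ζ = 1 := by
    rw [Complex.mul_conj, hns]; norm_num
  have hinv : ζ⁻¹ = (starRingEnd ℂ) ζ := Complex.inv_eq_conj habs
  have hns' : ζ.re ^ 2 + ζ.im ^ 2 = 1 := by
    have := hns; rw [Complex.normSq_apply] at this; nlinarith [this]
  have hre : ζ.re ≠ 0 := by
    intro h0
    apply h4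
    have h2 : ζ ^ 2 = -1 := by
      rw [Complex.ext_iff]
      constructor
      · simp [pow_two, Complex.mul_re, h0]; nlinarith
      · simp [pow_two, Complex.mul_im, h0]
    rw [show (4:ℕ) = 2*2 from rfl, pow_mul, h2]; norm_num
  have him : ζ.im ≠ 0 := by
    intro h0
    apply h4
    have h2 : ζ ^ 2 = 1 := by
      rw [Complex.ext_iff]
      constructor
      · simp [pow_two, Complex.mul_re, h0]; nlinarith
      · simp [pow_two, Complex.mul_im, h0]
    rw [show (4:ℕ) = 2*2 from rfl, pow_mul, h2]; norm_num
  exact ⟨hz0, hzz, hinv, hre, him⟩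

lemma g_alg (ζ : ℂ) (hz0 : ζ ≠ 0) (hzz : ζ * (starRingEnd ℂ) ζ = 1) :
    RatFunc.C ζ * RatFunc.X + (RatFunc.C ζ * RatFunc.X)⁻¹ =
    algebraMap ℂ[X] (RatFunc ℂ)
        (Polynomial.C ζ * Polynomial.X ^ 2 + Polynomial.C ((starRingEnd ℂ) ζ)) /
      algebraMap ℂ[X] (RatFunc ℂ) Polynomial.X := by
  have hX : (RatFunc.X : RatFunc ℂ) ≠ 0 := RatFunc.X_ne_zero
  have hC : (RatFunc.C ζ : RatFunc ℂ) ≠ 0 := by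
    simpa using hz0
  simp only [map_add, map_mul, map_pow, RatFunc.algebraMap_C, RatFunc.algebraMap_X]
  rw [eq_div_iff hX]
  field_simp
  have hq : RatFunc.C ζ * RatFunc.C ((starRingEnd ℂ) ζ) = 1 := by
    rw [← map_mul, hzz, map_one]
  linear_combination (-1 : RatFunc ℂ) * hq

lemma eval_map_conj (p : ℂ[X]) (t : ℝ) :
    (p.map (starRingEnd ℂ)).eval ((t:ℂ)) = (starRingEnd ℂ) (p.eval ((t:ℂ))) := by
  rw [Polynomial.eval_map]
  have : ((t:ℂ)) = (starRingEnd ℂ) ((t:ℂ)) := by rw [Complex.conj_ofReal]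
  rw [this, Polynomial.eval₂_at_apply]
  rw [Complex.conj_ofReal]

/-- **Example (Pakovich/Eremenko).** If ζ is an n-th root of unity with ζ⁴ ≠ 1, then for
g(z) = ζz + 1/(ζz) the curve g(ℝ̂) is not a circle; equivalently, there is no linear
fractional λ ∈ ℂ(z) with λ ∘ g ∈ ℝ(z). -/
theorem chebyshev_example_not_circle (n : ℕ) (hn : 0 < n) (ζ : ℂ) (hζ : ζ ^ n = 1)
    (h4 : ζ ^ 4 ≠ 1) :
    ¬ IsCircle (sphereMap (RatFunc.C ζ * RatFunc.X + (RatFunc.C ζ * RatFunc.X)⁻¹) ''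
        realSphere) ∧
    ¬ ∃ a b c d : ℂ, a * d - b * c ≠ 0 ∧
      ((RatFunc.C a * (RatFunc.C ζ * RatFunc.X + (RatFunc.C ζ * RatFunc.X)⁻¹) + RatFunc.C b) /
       (RatFunc.C c * (RatFunc.C ζ * RatFunc.X + (RatFunc.C ζ * RatFunc.X)⁻¹) +
        RatFunc.C d)).IsReal := by
  obtain ⟨hz0, hzz, hinv, hre, him⟩ := zeta_facts n hn ζ hζ h4
  have hXne : (Polynomial.X : ℂ[X]) ≠ 0 := Polynomial.X_ne_zero
  have hgalg := g_alg ζ hz0 hzz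
  constructor
  · rintro ⟨l, ⟨a, b, c, d, hdet, hl⟩, hSet⟩
    have hmem : ∀ t : ℝ, t ≠ 0 →
        (((ζ * (t:ℂ) + (starRingEnd ℂ) ζ / (t:ℂ)) : ℂ) : OnePoint ℂ) ∈
          sphereMap l '' realSphere := by
      intro t ht
      rw [← hSet]
      refine ⟨(((t:ℂ)) : OnePoint ℂ), Set.mem_insert_iff.mpr (Or.inr ⟨t, rfl⟩), ?_⟩
      have htC : ((t:ℂ)) ≠ 0 := by exact_mod_cast ht
      have hevX : (Polynomial.X : ℂ[X]).eval (t:ℂ) ≠ 0 := by simpa using htC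
      rw [sphereMap_eval _ _ _ hgalg hXne (t:ℂ) hevX]
      congr 1
      simp only [Polynomial.eval_add, Polynomial.eval_mul, Polynomial.eval_pow,
        Polynomial.eval_C, Polynomial.eval_X]
      field_simp
    have hkey := key ζ hre him d (-b) (-c) a (fun t ht => by
      have hc := circle_constraint a b c d hdet (ζ * (t:ℂ) + (starRingEnd ℂ) ζ / (t:ℂ))
        (by rw [← hl]; exact hmem t ht)
      have e1 : d * (ζ * (t:ℂ) + (starRingEnd ℂ) ζ / (t:ℂ)) + -b =
          d * (ζ * (t:ℂ) + (starRingEnd ℂ) ζ / (t:ℂ)) - b := by ring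
      have e2 : -c * (ζ * (t:ℂ) + (starRingEnd ℂ) ζ / (t:ℂ)) + a =
          a - c * (ζ * (t:ℂ) + (starRingEnd ℂ) ζ / (t:ℂ)) := by ring
      rw [e1, e2]
      exact hc)
    obtain ⟨hk1, hk2⟩ := hkey
    simp only [map_neg, neg_mul, mul_neg, neg_neg] at hk1 hk2
    have h2 : b * (starRingEnd ℂ) a = (starRingEnd ℂ) b * a := by
      linear_combination -hk2
    have h3 : d * (starRingEnd ℂ) a = (starRingEnd ℂ) b * c := hk1
    have hdz := det_zero' d b c a h2 h3
    exact hdet (by linear_combination hdz)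
  · rintro ⟨a, b, c, d, hdet, hreal⟩
    set f := ((RatFunc.C a * (RatFunc.C ζ * RatFunc.X + (RatFunc.C ζ * RatFunc.X)⁻¹) +
        RatFunc.C b) /
       (RatFunc.C c * (RatFunc.C ζ * RatFunc.X + (RatFunc.C ζ * RatFunc.X)⁻¹) +
        RatFunc.C d)) with hfdef
    set P := Polynomial.C (a*ζ) * Polynomial.X^2 + Polynomial.C b * Polynomial.X +
        Polynomial.C (a * (starRingEnd ℂ) ζ) with hPdef
    set Q := Polynomial.C (c*ζ) * Polynomial.X^2 + Polynomial.C d * Polynomial.X +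
        Polynomial.C (c * (starRingEnd ℂ) ζ) with hQdef
    have hcd : ¬(c = 0 ∧ d = 0) := by
      rintro ⟨rfl, rfl⟩; simp at hdet
    have hQ0 : Q ≠ 0 := by
      intro h0
      apply hcd
      have hc2 : c * ζ = 0 := by
        have h' := congrArg (fun p => Polynomial.coeff p 2) h0
        simp only [hQdef, Polynomial.coeff_add, Polynomial.coeff_C_mul, Polynomial.coeff_X_pow,
          Polynomial.coeff_C, Polynomial.coeff_X, Polynomial.coeff_zero] at h'
        norm_num at h'
        exact mul_eq_zero.mpr h'
      have hc1 : d = 0 := by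
        have h' := congrArg (fun p => Polynomial.coeff p 1) h0
        simp only [hQdef, Polynomial.coeff_add, Polynomial.coeff_C_mul, Polynomial.coeff_X_pow,
          Polynomial.coeff_C, Polynomial.coeff_X, Polynomial.coeff_zero] at h'
        norm_num at h'
        exact h'
      exact ⟨(mul_eq_zero.mp hc2).resolve_right hz0, hc1⟩
    have halgX : algebraMap ℂ[X] (RatFunc ℂ) Polynomial.X ≠ 0 :=
      RatFunc.algebraMap_ne_zero hXne
    have halgQ : algebraMap ℂ[X] (RatFunc ℂ) Q ≠ 0 :=
      RatFunc.algebraMap_ne_zero hQ0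
    have hnum : RatFunc.C a * (RatFunc.C ζ * RatFunc.X + (RatFunc.C ζ * RatFunc.X)⁻¹) +
        RatFunc.C b
        = algebraMap ℂ[X] (RatFunc ℂ) P / algebraMap ℂ[X] (RatFunc ℂ) Polynomial.X := by
      rw [hgalg, eq_div_iff halgX, add_mul, mul_assoc, div_mul_cancel₀ _ halgX]
      simp only [hPdef, map_add, map_mul, map_pow, RatFunc.algebraMap_C, RatFunc.algebraMap_X]
      ring
    have hden : RatFunc.C c * (RatFunc.C ζ * RatFunc.X + (RatFunc.C ζ * RatFunc.X)⁻¹) +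
        RatFunc.C d
        = algebraMap ℂ[X] (RatFunc ℂ) Q / algebraMap ℂ[X] (RatFunc ℂ) Polynomial.X := by
      rw [hgalg, eq_div_iff halgX, add_mul, mul_assoc, div_mul_cancel₀ _ halgX]
      simp only [hQdef, map_add, map_mul, map_pow, RatFunc.algebraMap_C, RatFunc.algebraMap_X]
      ring
    have hfPQ : f = algebraMap ℂ[X] (RatFunc ℂ) P / algebraMap ℂ[X] (RatFunc ℂ) Q := by
      rw [hfdef, hnum, hden, div_div_div_cancel_right₀ halgX]
    have hstar2 : f.num * Q = P * f.denom := by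
      rw [hfPQ]; exact star_rel P Q hQ0
    have hnumc : f.num.map (starRingEnd ℂ) = f.num :=
      Polynomial.ext fun k => by
        rw [Polynomial.coeff_map]
        exact Complex.conj_eq_iff_im.mpr (hreal.1 k)
    have hdenc : f.denom.map (starRingEnd ℂ) = f.denom :=
      Polynomial.ext fun k => by
        rw [Polynomial.coeff_map]
        exact Complex.conj_eq_iff_im.mpr (hreal.2 k)
    have hstar2c : f.num * Q.map (starRingEnd ℂ) = P.map (starRingEnd ℂ) * f.denom := by
      have := congrArg (Polynomial.map (starRingEnd ℂ)) hstar2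
      simpa only [Polynomial.map_mul, hnumc, hdenc] using this
    have hPQc : P * Q.map (starRingEnd ℂ) = P.map (starRingEnd ℂ) * Q := by
      apply mul_right_cancel₀ f.denom_ne_zero
      linear_combination (-(Polynomial.map (starRingEnd ℂ) Q)) * hstar2 + Q * hstar2c
    have heval : ∀ t : ℝ, t ≠ 0 →
        ((a * (ζ * (t:ℂ) + (starRingEnd ℂ) ζ / (t:ℂ)) + b) *
          (starRingEnd ℂ) (c * (ζ * (t:ℂ) + (starRingEnd ℂ) ζ / (t:ℂ)) + d)).im = 0 := by
      intro t ht
      have htC : ((t:ℂ)) ≠ 0 := by exact_mod_cast ht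
      have hev := congrArg (Polynomial.eval ((t:ℂ))) hPQc
      rw [Polynomial.eval_mul, Polynomial.eval_mul, eval_map_conj, eval_map_conj] at hev
      set W := ζ * (t:ℂ) + (starRingEnd ℂ) ζ / (t:ℂ) with hW
      have hPt : P.eval ((t:ℂ)) = (t:ℂ) * (a * W + b) := by
        simp only [hPdef, Polynomial.eval_add, Polynomial.eval_mul, Polynomial.eval_pow,
          Polynomial.eval_C, Polynomial.eval_X, hW]
        field_simp
        ring
      have hQt : Q.eval ((t:ℂ)) = (t:ℂ) * (c * W + d) := by
        simp only [hQdef, Polynomial.eval_add, Polynomial.eval_mul, Polynomial.eval_pow,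
          Polynomial.eval_C, Polynomial.eval_X, hW]
        field_simp
        ring
      rw [hPt, hQt] at hev
      rw [map_mul, map_mul, Complex.conj_ofReal] at hev
      have h2 : (a * W + b) * (starRingEnd ℂ) (c * W + d) =
          (starRingEnd ℂ) (a * W + b) * (c * W + d) := by
        apply mul_left_cancel₀ (pow_ne_zero 2 htC)
        linear_combination hev
      have h3 : (starRingEnd ℂ) ((a * W + b) * (starRingEnd ℂ) (c * W + d)) =
          (a * W + b) * (starRingEnd ℂ) (c * W + d) := by
        rw [map_mul, Complex.conj_conj]
        exact h2.symm
      exact Complex.conj_eq_iff_im.mp h3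
    obtain ⟨hk1, hk2⟩ := key ζ hre him a b c d heval
    have hdz := det_zero' a b c d hk2 hk1
    exact hdet hdz
end
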